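/- Let p be an odd prime and let M, A be unitary operators on a finite-dimensional Hilbert space satisfying M^p = A^p = I and MA = ω^φ AM with φ ∈ F_p, φ ≠ 0, where ω = e^{2πi/p}. Then for any σ, a ∈ F_p, the operator V = (ω^a/√p) Σ_{k=0}^{p−1} ω^{−k(σ−a)} M^k A^{−k−1} is unitary. -/

import Mathlib

open Matrix

/-- The `p`-th root of unity `ω = e^{2πi/p}`. -/
noncomputable def omega (p : ℕ) : ℂ := Complex.exp (2 * Real.pi * Complex.I / p)

/-- The operator `V = (ω^a/√p) Σ_{k=0}^{p−1} ω^{−k(σ−a)} M^k A^{−k−1}`,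
where `A⁻¹ = A† = star A` for a unitary `A`. -/
noncomputable def Vop (p d : ℕ) (M A : Matrix (Fin d) (Fin d) ℂ) (σ a : ZMod p) :
    Matrix (Fin d) (Fin d) ℂ :=
  (omega p ^ a.val / (Real.sqrt p : ℂ)) •
    ∑ k ∈ Finset.range p,
      omega p ^ ((-(k : ZMod p) * (σ - a)).val) • (M ^ k * (star A) ^ (k + 1))

/-! ### Auxiliary lemmas about `omega` -/

lemma omega_prim {p : ℕ} (hp : p ≠ 0) : IsPrimitiveRoot (omega p) p :=
  Complex.isPrimitiveRoot_exp p hp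

lemma omega_pow_p {p : ℕ} (hp : p ≠ 0) : omega p ^ p = 1 := (omega_prim hp).pow_eq_one

lemma omega_pow_mod {p : ℕ} (hp : p ≠ 0) (n : ℕ) : omega p ^ n = omega p ^ (n % p) := by
  conv_lhs => rw [← Nat.div_add_mod n p]
  rw [pow_add, pow_mul, omega_pow_p hp, one_pow, one_mul]

lemma omega_pow_natCast {p : ℕ} (hp : p ≠ 0) (n : ℕ) :
    omega p ^ n = omega p ^ ((n : ZMod p)).val := by
  rw [ZMod.val_natCast, ← omega_pow_mod hp]

lemma omega_pow_add {p : ℕ} (hp : p ≠ 0) (x y : ZMod p) :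
    omega p ^ ((x + y).val) = omega p ^ x.val * omega p ^ y.val := by
  haveI : NeZero p := ⟨hp⟩
  rw [← pow_add, omega_pow_natCast hp (x.val + y.val)]
  congr 2
  push_cast [ZMod.natCast_rightInverse x, ZMod.natCast_rightInverse y]
  rfl

lemma omega_normSq {p : ℕ} : Complex.normSq (omega p) = 1 := by
  have h1 : ‖omega p‖ = 1 := by
    simp [omega, Complex.norm_exp]
  rw [Complex.normSq_eq_norm_sq, h1, one_pow]

lemma omega_mul_conj {p : ℕ} (x : ZMod p) :
    (starRingEnd ℂ) (omega p ^ x.val) * omega p ^ x.val = 1 := by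
  rw [mul_comm, Complex.mul_conj]
  norm_cast
  rw [map_pow, omega_normSq, one_pow]

lemma sum_range_zmod {p : ℕ} [NeZero p] {β : Type*} [AddCommMonoid β] (f : ZMod p → β) :
    ∑ k ∈ Finset.range p, f (k : ZMod p) = ∑ t : ZMod p, f t := by
  refine Finset.sum_nbij' (fun k => (k : ZMod p)) (fun t => t.val) ?_ ?_ ?_ ?_ ?_
  · intro k _; exact Finset.mem_univ _
  · intro t _; exact Finset.mem_range.mpr (ZMod.val_lt t)
  · intro k hk; exact ZMod.val_cast_of_lt (Finset.mem_range.mp hk)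
  · intro t _; exact ZMod.natCast_rightInverse t
  · intro k _; rfl

lemma omega_conj {p : ℕ} (hp : p ≠ 0) (x : ZMod p) :
    (starRingEnd ℂ) (omega p ^ x.val) = omega p ^ ((-x).val) := by
  haveI : NeZero p := ⟨hp⟩
  have h2 : omega p ^ ((-x).val) * omega p ^ x.val = 1 := by
    rw [← omega_pow_add hp, neg_add_cancel]
    simp [ZMod.val_zero]
  have h1 := omega_mul_conj (p := p) x
  have hne : omega p ^ x.val ≠ 0 := by
    intro h
    simp [h] at h1
  exact mul_right_cancel₀ hne (h1.trans h2.symm)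

lemma sum_omega_univ {p : ℕ} [Fact p.Prime] :
    ∑ t : ZMod p, omega p ^ t.val = 0 := by
  have hp : p ≠ 0 := (Fact.out : p.Prime).ne_zero
  haveI : NeZero p := ⟨hp⟩
  have hne1 : omega p ≠ 1 := (omega_prim hp).ne_one (Fact.out : p.Prime).one_lt
  have h := sum_range_zmod (p := p) (fun t => omega p ^ t.val)
  rw [← h]
  have : ∀ k ∈ Finset.range p, omega p ^ ((k : ZMod p)).val = omega p ^ k := by
    intro k hk
    rw [ZMod.val_cast_of_lt (Finset.mem_range.mp hk)]
  rw [Finset.sum_congr rfl this, geom_sum_eq hne1, omega_pow_p hp]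
  simp

lemma sum_omega_affine {p : ℕ} [Fact p.Prime] (c b : ZMod p) (hb : b ≠ 0) :
    ∑ j : ZMod p, omega p ^ ((c + b * j).val) = 0 := by
  have hp : p ≠ 0 := (Fact.out : p.Prime).ne_zero
  have h1 : ∑ j : ZMod p, omega p ^ ((c + b * j).val)
      = ∑ j : ZMod p, omega p ^ c.val * omega p ^ ((b * j).val) :=
    Finset.sum_congr rfl fun j _ => omega_pow_add hp c (b * j)
  rw [h1, ← Finset.mul_sum]
  have hbij : Function.Bijective (fun j : ZMod p => b * j) := mulLeft_bijective₀ b hb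
  have h2 : ∑ j : ZMod p, omega p ^ ((b * j).val) = ∑ t : ZMod p, omega p ^ t.val :=
    Fintype.sum_bijective _ hbij _ _ (fun j => rfl)
  rw [h2, sum_omega_univ, mul_zero]

/-! ### Auxiliary lemmas about matrices -/

section matrixaux
variable {d : ℕ}

lemma comm_pow (M A : Matrix (Fin d) (Fin d) ℂ) (z : ℂ) (h : M * A = z • (A * M)) :
    ∀ j k : ℕ, M ^ j * A ^ k = z ^ (j * k) • (A ^ k * M ^ j) := by
  have step1 : ∀ k : ℕ, M * A ^ k = z ^ k • (A ^ k * M) := by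
    intro k
    induction k with
    | zero => simp
    | succ k ih =>
      calc M * A ^ (k+1) = (M * A ^ k) * A := by rw [pow_succ, mul_assoc]
        _ = (z ^ k • (A ^ k * M)) * A := by rw [ih]
        _ = z ^ k • (A ^ k * (M * A)) := by rw [smul_mul_assoc, mul_assoc]
        _ = z ^ k • (A ^ k * (z • (A * M))) := by rw [h]
        _ = (z ^ k * z) • (A ^ k * (A * M)) := by rw [mul_smul_comm, smul_smul]
        _ = z ^ (k+1) • (A ^ (k+1) * M) := by rw [← pow_succ, ← mul_assoc, ← pow_succ]
  intro j k
  induction j with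
  | zero => simp
  | succ j ih =>
    calc M ^ (j+1) * A ^ k = M ^ j * (M * A ^ k) := by rw [pow_succ, mul_assoc]
      _ = M ^ j * (z ^ k • (A ^ k * M)) := by rw [step1]
      _ = z ^ k • ((M ^ j * A ^ k) * M) := by rw [mul_smul_comm, mul_assoc]
      _ = z ^ k • ((z ^ (j*k) • (A ^ k * M ^ j)) * M) := by rw [ih]
      _ = (z ^ k * z ^ (j*k)) • (A ^ k * (M ^ j * M)) := by
          rw [smul_mul_assoc, smul_smul, mul_assoc]
      _ = z ^ ((j+1)*k) • (A ^ k * M ^ (j+1)) := by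
          rw [← pow_add, ← pow_succ]
          congr 1
          ring

lemma star_eq_pow (X : Matrix (Fin d) (Fin d) ℂ) (h1 : star X * X = 1) {p : ℕ}
    (hXp : X ^ p = 1) (hp0 : p ≠ 0) : star X = X ^ (p - 1) := by
  have h1' : X * star X = 1 := mul_eq_one_comm.mp h1
  have h2 : X ^ (p - 1) * X = 1 := by
    rw [← pow_succ, Nat.sub_add_cancel (Nat.one_le_iff_ne_zero.mpr hp0), hXp]
  calc star X = 1 * star X := (one_mul _).symm
    _ = (X ^ (p-1) * X) * star X := by rw [h2]
    _ = X ^ (p-1) * (X * star X) := by rw [mul_assoc]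
    _ = X ^ (p-1) := by rw [h1', mul_one]

lemma pow_zmod (X : Matrix (Fin d) (Fin d) ℂ) {p : ℕ} (hXp : X ^ p = 1) (hp0 : p ≠ 0)
    (n : ℕ) : X ^ n = X ^ ((n : ZMod p)).val := by
  haveI : NeZero p := ⟨hp0⟩
  rw [ZMod.val_natCast]
  conv_lhs => rw [← Nat.div_add_mod n p]
  rw [pow_add, pow_mul, hXp, one_pow, one_mul]

end matrixaux

/-- if `M, A` are unitaries with `M^p = A^p = I` and
`MA = ω^φ AM` with `φ ≠ 0`, then `V` is unitary. -/
theorem stmt5 (p d : ℕ) [Fact p.Prime] (hodd : Odd p)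
    (M A : Matrix (Fin d) (Fin d) ℂ)
    (hM : M ∈ Matrix.unitaryGroup (Fin d) ℂ)
    (hA : A ∈ Matrix.unitaryGroup (Fin d) ℂ)
    (hMp : M ^ p = 1) (hAp : A ^ p = 1)
    (φ : ZMod p) (hφ : φ ≠ 0)
    (hcomm : M * A = omega p ^ φ.val • (A * M))
    (σ a : ZMod p) :
    Vop p d M A σ a ∈ Matrix.unitaryGroup (Fin d) ℂ := by
  have hp' : p.Prime := Fact.out
  have hp0 : p ≠ 0 := hp'.ne_zero
  haveI : NeZero p := ⟨hp0⟩
  rw [Matrix.mem_unitaryGroup_iff']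
  have hA1 : star A * A = 1 := Matrix.mem_unitaryGroup_iff'.mp hA
  have hM1 : star M * M = 1 := Matrix.mem_unitaryGroup_iff'.mp hM
  have hsA : star A = A ^ (p - 1) := star_eq_pow A hA1 hAp hp0
  have hsM : star M = M ^ (p - 1) := star_eq_pow M hM1 hMp hp0
  have hApow : ∀ n : ℕ, A ^ n = A ^ ((n : ZMod p)).val := pow_zmod A hAp hp0
  have hMpow : ∀ n : ℕ, M ^ n = M ^ ((n : ZMod p)).val := pow_zmod M hMp hp0
  have hcp : ∀ j k : ℕ, M ^ j * A ^ k = (omega p ^ φ.val) ^ (j * k) • (A ^ k * M ^ j) :=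
    comm_pow M A _ hcomm
  have hp1 : ((p - 1 : ℕ) : ZMod p) = -1 := by
    rw [Nat.cast_sub (Nat.one_le_iff_ne_zero.mpr hp0)]
    simp
  have hcφ : ((φ.val : ℕ) : ZMod p) = φ := ZMod.natCast_rightInverse φ
  -- the canonical form of each cross term
  set G : ZMod p → ZMod p → Matrix (Fin d) (Fin d) ℂ := fun x y =>
    omega p ^ (((x - y) * (σ - a) - φ * (y - x) * (y + 1)).val) •
      (A ^ ((x - y).val) * M ^ ((y - x).val)) with hG
  have key : ∀ j k : ℕ,
      star (omega p ^ ((-(j : ZMod p) * (σ - a)).val) • (M ^ j * (star A) ^ (j + 1))) *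
        (omega p ^ ((-(k : ZMod p) * (σ - a)).val) • (M ^ k * (star A) ^ (k + 1)))
      = G (j : ZMod p) (k : ZMod p) := by
    intro j k
    have hmat : star (M ^ j * (star A) ^ (j + 1)) * (M ^ k * (star A) ^ (k + 1))
        = (omega p ^ φ.val) ^ (((p-1)*j + k) * ((p-1)*(k+1))) •
          (A ^ (j + 1 + (p-1)*(k+1)) * M ^ ((p-1)*j + k)) := by
      rw [StarMul.star_mul, star_pow, star_pow, star_star, hsM, hsA, ← pow_mul M, ← pow_mul A,
        mul_assoc, ← mul_assoc (M ^ ((p-1)*j)), ← pow_add, hcp, mul_smul_comm, ← mul_assoc (A ^ (j+1)),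
        ← pow_add]
    rw [star_smul, smul_mul_assoc, mul_smul_comm, smul_smul, hmat, smul_smul]
    have hstar : (star (omega p ^ ((-(j : ZMod p) * (σ - a)).val)) : ℂ)
        = omega p ^ ((-(-(j : ZMod p) * (σ - a))).val) := omega_conj hp0 _
    rw [hstar]
    have hpowc : (omega p ^ φ.val) ^ (((p-1)*j + k) * ((p-1)*(k+1)))
        = omega p ^ ((((φ.val * (((p-1)*j + k) * ((p-1)*(k+1))) : ℕ)) : ZMod p)).val := by
      rw [← pow_mul, omega_pow_natCast hp0]
    rw [hpowc]
    rw [← omega_pow_add hp0, ← omega_pow_add hp0]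
    rw [hApow (j + 1 + (p-1)*(k+1)), hMpow ((p-1)*j + k)]
    have e1 : (-(-(j : ZMod p) * (σ - a)) + -(k : ZMod p) * (σ - a) +
        ((φ.val * (((p-1)*j + k) * ((p-1)*(k+1))) : ℕ) : ZMod p))
        = (((j : ZMod p) - k) * (σ - a) - φ * ((k : ZMod p) - j) * ((k : ZMod p) + 1)) := by
      push_cast [hp1, hcφ]
      ring
    have e2 : (((j + 1 + (p-1)*(k+1) : ℕ)) : ZMod p) = (j : ZMod p) - k := by
      push_cast [hp1]
      ring
    have e3 : (((((p-1)*j + k) : ℕ)) : ZMod p) = (k : ZMod p) - j := by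
      push_cast [hp1]
      ring
    rw [e1, e2, e3]
  -- the double sum collapses
  have hsum : ∑ x : ZMod p, ∑ y : ZMod p, G x y = (p : ℂ) • (1 : Matrix (Fin d) (Fin d) ℂ) := by
    have hinner : ∀ x : ZMod p, ∑ y : ZMod p, G x y = ∑ m : ZMod p, G x (x + m) := by
      intro x
      exact (Fintype.sum_equiv (Equiv.addLeft x) _ _ (fun m => rfl)).symm
    rw [Finset.sum_congr rfl (fun x _ => hinner x), Finset.sum_comm]
    have hterm : ∀ m : ZMod p, ∀ x : ZMod p, G x (x + m)
        = omega p ^ (((-m * (σ - a) - φ * m * (m + 1)) + (-(φ * m)) * x).val) •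
          (A ^ ((-m).val) * M ^ (m.val)) := by
      intro m x
      simp only [hG]
      have h1 : x - (x + m) = -m := by ring
      have h2 : x + m - x = m := by ring
      have h3 : (x - (x + m)) * (σ - a) - φ * (x + m - x) * (x + m + 1)
          = (-m * (σ - a) - φ * m * (m + 1)) + (-(φ * m)) * x := by ring
      rw [h3, h1, h2]
    rw [Finset.sum_congr rfl (fun m _ => Finset.sum_congr rfl (fun x _ => hterm m x))]
    have hzero : ∀ m : ZMod p, m ≠ 0 →
        (∑ x : ZMod p, omega p ^ (((-m * (σ - a) - φ * m * (m + 1)) + (-(φ * m)) * x).val) •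
          (A ^ ((-m).val) * M ^ (m.val))) = 0 := by
      intro m hm
      rw [← Finset.sum_smul]
      rw [sum_omega_affine _ _ (by
        simp only [neg_ne_zero]
        exact mul_ne_zero hφ hm)]
      rw [zero_smul]
    rw [Finset.sum_eq_single_of_mem 0 (Finset.mem_univ 0)
      (fun m _ hm => hzero m hm)]
    simp only [neg_zero, zero_mul, mul_zero, zero_sub, sub_zero, zero_add, neg_zero,
      ZMod.val_zero, pow_zero, one_smul, mul_one, one_mul]
    rw [Finset.sum_const, Finset.card_univ, ZMod.card, ← Nat.cast_smul_eq_nsmul ℂ]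
  -- put everything together
  rw [Vop]
  rw [star_smul, smul_mul_assoc, mul_smul_comm, smul_smul, star_sum, Finset.sum_mul_sum]
  have hkey2 : ∑ j ∈ Finset.range p, ∑ k ∈ Finset.range p,
      star (omega p ^ ((-(j : ZMod p) * (σ - a)).val) • (M ^ j * (star A) ^ (j + 1))) *
        (omega p ^ ((-(k : ZMod p) * (σ - a)).val) • (M ^ k * (star A) ^ (k + 1)))
      = ∑ x : ZMod p, ∑ y : ZMod p, G x y := by
    rw [← sum_range_zmod (p := p) (fun x => ∑ y : ZMod p, G x y)]
    refine Finset.sum_congr rfl fun j _ => ?_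
    rw [← sum_range_zmod (p := p) (fun y => G (j : ZMod p) y)]
    exact Finset.sum_congr rfl fun k _ => key j k
  rw [hkey2, hsum, smul_smul]
  have hs : star (omega p ^ a.val / ((Real.sqrt p : ℝ) : ℂ)) *
      (omega p ^ a.val / ((Real.sqrt p : ℝ) : ℂ)) = 1 / (p : ℂ) := by
    rw [star_div₀, div_mul_div_comm]
    have h1 : star (omega p ^ a.val) * omega p ^ a.val = 1 := omega_mul_conj a
    have h2 : star (((Real.sqrt p : ℝ)) : ℂ) * ((Real.sqrt p : ℝ) : ℂ) = (p : ℂ) := by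
      rw [show star (((Real.sqrt p : ℝ)) : ℂ) = ((Real.sqrt p : ℝ) : ℂ) from Complex.conj_ofReal _]
      norm_cast
      rw [Real.mul_self_sqrt (Nat.cast_nonneg p)]
    rw [h1, h2]
  rw [hs, one_div, inv_mul_cancel₀ (by exact_mod_cast hp0 : (p : ℂ) ≠ 0), one_smul]
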